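/- Let A, B be 4×2 matrices over a commutative ring and let A⋆B be the 4×4 row-wise Kronecker amalgam. If rows i and j of A are equal and rows i and j of B are equal (for some i ≠ j), then det(A⋆B) = 0; moreover, this follows from the two-term formula det(A⋆B) = det A_{12} det A_{34} det B_{13} det B_{24} − det A_{13} det A_{24} det B_{12} det B_{34}. -/

import Mathlib

/-- The amalgam of two `4 × 2` matrices: its `k`-th row is the Kronecker tensor
product of the `k`-th row of `A` with the `k`-th row of `B`. -/
def amalgam42 {R : Type*} [CommRing R] (A B : Matrix (Fin 4) (Fin 2) R) :
    Matrix (Fin 4) (Fin 4) R :=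
  Matrix.of fun i k =>
    A i ⟨k.val % 2, by omega⟩ * B i ⟨k.val / 2, by have := k.isLt; omega⟩

theorem amalgam42_eq_explicit {R : Type*} [CommRing R] (A B : Matrix (Fin 4) (Fin 2) R) :
    amalgam42 A B =
      !![A 0 0 * B 0 0, A 0 1 * B 0 0, A 0 0 * B 0 1, A 0 1 * B 0 1;
         A 1 0 * B 1 0, A 1 1 * B 1 0, A 1 0 * B 1 1, A 1 1 * B 1 1;
         A 2 0 * B 2 0, A 2 1 * B 2 0, A 2 0 * B 2 1, A 2 1 * B 2 1;
         A 3 0 * B 3 0, A 3 1 * B 3 0, A 3 0 * B 3 1, A 3 1 * B 3 1] := by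
  ext i k
  fin_cases i <;> fin_cases k <;> rfl

set_option maxHeartbeats 2000000 in
theorem amalgam42_det_formula {R : Type*} [CommRing R] (A B : Matrix (Fin 4) (Fin 2) R) :
      (amalgam42 A B).det =
        (Matrix.of ![A 0, A 1]).det * (Matrix.of ![A 2, A 3]).det *
          (Matrix.of ![B 0, B 2]).det * (Matrix.of ![B 1, B 3]).det
        - (Matrix.of ![A 0, A 2]).det * (Matrix.of ![A 1, A 3]).det *
          (Matrix.of ![B 0, B 1]).det * (Matrix.of ![B 2, B 3]).det := by
  rw [amalgam42_eq_explicit]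
  simp [Matrix.det_succ_row_zero, Fin.sum_univ_succ, Matrix.det_fin_two, Fin.isValue,
    (show Fin.succAbove (2:Fin 4) (2:Fin 3) = 3 from rfl),
    (show Fin.succAbove (1:Fin 4) (2:Fin 3) = 3 from rfl),
    (show Fin.succAbove (3:Fin 4) (2:Fin 3) = 2 from rfl),
    (show Fin.castSucc (2:Fin 3) = (2:Fin 4) from rfl)]
  ring

theorem stmt_14 {R : Type*} [CommRing R] (A B : Matrix (Fin 4) (Fin 2) R)
    (i j : Fin 4) (hij : i ≠ j) (hA : A i = A j) (hB : B i = B j) :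
    (amalgam42 A B).det = 0 ∧
      (amalgam42 A B).det =
        (Matrix.of ![A 0, A 1]).det * (Matrix.of ![A 2, A 3]).det *
          (Matrix.of ![B 0, B 2]).det * (Matrix.of ![B 1, B 3]).det
        - (Matrix.of ![A 0, A 2]).det * (Matrix.of ![A 1, A 3]).det *
          (Matrix.of ![B 0, B 1]).det * (Matrix.of ![B 2, B 3]).det := by
  refine ⟨?_, amalgam42_det_formula A B⟩
  apply Matrix.det_zero_of_row_eq hij
  funext k
  simp only [amalgam42, Matrix.of_apply, hA, hB]
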